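/- Let F be a totally complex number field of degree 2k and ψ the relative canonical embedding into ℂ^k. Then the dual lattice of Λ = ψ(O_F), with respect to the inner product ⟨x,y⟩ = Re(x†y), equals Λ* = 2·conj(ψ(O_F^∨)), where conj denotes componentwise complex conjugation. -/

import Mathlib

open NumberField
open scoped nonZeroDivisors

section Aux

variable {F : Type*} [Field F] [NumberField F] {k : ℕ}

omit [NumberField F] in
private lemma aux_uniq (σ : Fin k → (F →+* ℂ))
    (hcx : ∀ i, σ i ≠ (starRingEnd ℂ).comp (σ i))
    (hσ : ∀ φ : F →+* ℂ, ∃! i : Fin k, φ = σ i ∨ φ = (starRingEnd ℂ).comp (σ i)) :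
    Function.Bijective (fun p : Fin k × Bool =>
      if p.2 then (starRingEnd ℂ).comp (σ p.1) else σ p.1) := by
  have hcc : ∀ i, (starRingEnd ℂ).comp ((starRingEnd ℂ).comp (σ i)) = σ i := by
    intro i; ext x; simp
  constructor
  · rintro ⟨i, b⟩ ⟨j, b'⟩ h
    simp only at h
    have key : ∀ (i j : Fin k), σ i = σ j ∨ σ i = (starRingEnd ℂ).comp (σ j) → i = j := by
      intro i j hij
      obtain ⟨l, -, hl⟩ := hσ (σ i)
      exact (hl i (Or.inl rfl)).trans (hl j hij).symm
    cases b <;> cases b' <;> simp only [if_true, if_false, Bool.false_eq_true] at h ⊢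
    · exact Prod.ext (key i j (Or.inl h)) rfl
    · have := key i j (Or.inr h)
      subst this
      exact absurd h (hcx i)
    · have h2 : σ i = (starRingEnd ℂ).comp (σ j) := by rw [← h, hcc i]
      have hij := key i j (Or.inr h2)
      subst hij
      exact absurd h2 (hcx i)
    · have : σ i = σ j := by rw [← hcc i, h, hcc j]
      exact Prod.ext (key i j (Or.inl this)) rfl
  · intro φ
    obtain ⟨i, hi, -⟩ := hσ φ
    cases hi with
    | inl h => exact ⟨(i, false), h.symm⟩
    | inr h => exact ⟨(i, true), h.symm⟩

private lemma aux_trace (σ : Fin k → (F →+* ℂ))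
    (hcx : ∀ i, σ i ≠ (starRingEnd ℂ).comp (σ i))
    (hσ : ∀ φ : F →+* ℂ, ∃! i : Fin k, φ = σ i ∨ φ = (starRingEnd ℂ).comp (σ i))
    (y : F) :
    ((Algebra.trace ℚ F y : ℚ) : ℝ) = 2 * (∑ i, σ i y).re := by
  have h := trace_eq_sum_embeddings (K := ℚ) (L := F) ℂ (x := y)
  have h2 : ∑ τ : F →ₐ[ℚ] ℂ, τ y = ∑ φ : F →+* ℂ, φ y :=
    (Fintype.sum_equiv (RingHom.equivRatAlgHom F ℂ) (fun φ => (RingHom.equivRatAlgHom F ℂ φ) y)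
      (fun φ => φ y) (fun φ => rfl)).symm
  have h3 : ∑ φ : F →+* ℂ, φ y
      = ∑ p : Fin k × Bool, (if p.2 then (starRingEnd ℂ).comp (σ p.1) else σ p.1) y :=
    (Fintype.sum_bijective _ (aux_uniq σ hcx hσ) _ _ (fun p => rfl)).symm
  have h4 : ∑ p : Fin k × Bool, (if p.2 then (starRingEnd ℂ).comp (σ p.1) else σ p.1) y
      = ∑ i, ((starRingEnd ℂ) (σ i y) + σ i y) := by
    rw [Fintype.sum_prod_type]
    refine Finset.sum_congr rfl fun i _ => ?_
    rw [Fintype.sum_bool]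
    simp
  have h5 : ∑ i, ((starRingEnd ℂ) (σ i y) + σ i y) = ((2 * (∑ i, σ i y).re : ℝ) : ℂ) := by
    have hterm : ∀ i ∈ Finset.univ, (starRingEnd ℂ) (σ i y) + σ i y
        = ((2 * (σ i y).re : ℝ) : ℂ) := fun i _ => by rw [add_comm, Complex.add_conj]
    rw [Finset.sum_congr rfl hterm, ← Complex.ofReal_sum]
    norm_cast
    rw [← Finset.mul_sum, Complex.re_sum]
  have hfin : (algebraMap ℚ ℂ) (Algebra.trace ℚ F y) = ((2 * (∑ i, σ i y).re : ℝ) : ℂ) := by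
    rw [h, h2, h3, h4, h5]
  have : (((Algebra.trace ℚ F y : ℚ) : ℝ) : ℂ) = ((2 * (∑ i, σ i y).re : ℝ) : ℂ) := by
    rw [← hfin]; norm_num
  exact_mod_cast this

/-- The real-linear functional `u ↦ Re(∑ conj (v i) * u i)` on `ℂᵏ`. -/
private noncomputable def pairLM {k : ℕ} (v : Fin k → ℂ) : (Fin k → ℂ) →ₗ[ℝ] ℝ where
  toFun u := (∑ i, (starRingEnd ℂ) (v i) * u i).re
  map_add' x y := by
    simp only [Pi.add_apply, mul_add, Finset.sum_add_distrib, Complex.add_re]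
  map_smul' r x := by
    simp only [Pi.smul_apply, Complex.real_smul, RingHom.id_apply, smul_eq_mul]
    have : ∀ i ∈ Finset.univ, (starRingEnd ℂ) (v i) * ((r : ℂ) * x i)
        = (r : ℂ) * ((starRingEnd ℂ) (v i) * x i) := fun i _ => by ring
    rw [Finset.sum_congr rfl this, ← Finset.mul_sum, Complex.re_ofReal_mul]

@[simp] private lemma pairLM_apply {k : ℕ} (v u : Fin k → ℂ) :
    pairLM v u = (∑ i, (starRingEnd ℂ) (v i) * u i).re := rfl

private lemma pairLM_self_eq_zero {k : ℕ} {v : Fin k → ℂ} (h : pairLM v v = 0) : v = 0 := by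
  have h0 : (∑ i, (starRingEnd ℂ) (v i) * v i).re = 0 := h
  have hsq : ∀ i, (starRingEnd ℂ) (v i) * v i = ((Complex.normSq (v i) : ℝ) : ℂ) := by
    intro i; rw [mul_comm, Complex.mul_conj]
  rw [Finset.sum_congr rfl (fun i _ => hsq i), ← Complex.ofReal_sum, Complex.ofReal_re] at h0
  have hz : ∀ i ∈ Finset.univ, Complex.normSq (v i) = 0 :=
    (Finset.sum_eq_zero_iff_of_nonneg (fun i _ => Complex.normSq_nonneg (v i))).mp h0
  funext i
  exact Complex.normSq_eq_zero.mp (hz i (Finset.mem_univ i))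

private lemma aux_span (σ : Fin k → (F →+* ℂ))
    (hcx : ∀ i, σ i ≠ (starRingEnd ℂ).comp (σ i))
    (hσ : ∀ φ : F →+* ℂ, ∃! i : Fin k, φ = σ i ∨ φ = (starRingEnd ℂ).comp (σ i)) :
    Submodule.span ℝ (Set.range (fun j : Module.Free.ChooseBasisIndex ℤ (𝓞 F) =>
      fun i => σ i (integralBasis F j))) = ⊤ := by
  classical
  have hconj : ∀ φ : F →+* ℂ, ComplexEmbedding.conjugate φ = (starRingEnd ℂ).comp φ := by
    intro φ; rfl
  have hnr : ∀ i, ¬ ComplexEmbedding.IsReal (σ i) := by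
    intro i hreal
    exact hcx i (by rw [← hconj, ComplexEmbedding.isReal_iff.mp hreal])
  have hwc : ∀ i, InfinitePlace.IsComplex (InfinitePlace.mk (σ i)) := fun i =>
    InfinitePlace.isComplex_mk_iff.mpr (hnr i)
  set w : Fin k → {w : InfinitePlace F // InfinitePlace.IsComplex w} :=
    fun i => ⟨InfinitePlace.mk (σ i), hwc i⟩ with hw
  have hwinj : Function.Injective w := by
    intro i j hij
    have : InfinitePlace.mk (σ i) = InfinitePlace.mk (σ j) := congrArg Subtype.val hij
    rw [InfinitePlace.mk_eq_iff] at this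
    obtain ⟨l, -, hl⟩ := hσ (σ j)
    cases this with
    | inl h => exact (hl i (Or.inl h.symm)).trans (hl j (Or.inl rfl)).symm
    | inr h => exact (hl i (Or.inr (by rw [← h, hconj]))).trans (hl j (Or.inl rfl)).symm
  have hwsurj : Function.Surjective w := by
    rintro ⟨v, hv⟩
    obtain ⟨i, hi, -⟩ := hσ v.embedding
    refine ⟨i, Subtype.ext ?_⟩
    have hmk : InfinitePlace.mk v.embedding = v := InfinitePlace.mk_embedding v
    cases hi with
    | inl h => simp only [hw]; rw [← h, hmk]
    | inr h =>
        simp only [hw]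
        rw [← InfinitePlace.mk_conjugate_eq, hconj, ← h, hmk]
  have hembed : ∀ i, (w i).1.embedding = σ i ∨
      (w i).1.embedding = (starRingEnd ℂ).comp (σ i) := by
    intro i
    have := InfinitePlace.mk_eq_iff.mp (InfinitePlace.mk_embedding (InfinitePlace.mk (σ i)))
    have hcc2 : ∀ φ : F →+* ℂ, ComplexEmbedding.conjugate (ComplexEmbedding.conjugate φ) = φ :=
      fun φ => star_star φ
    cases this with
    | inl h => exact Or.inl h
    | inr h =>
        refine Or.inr ?_
        rw [← hconj, ← h, hcc2]
  let Φ : mixedEmbedding.mixedSpace F →ₗ[ℝ] (Fin k → ℂ) :=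
    { toFun := fun x i => if (w i).1.embedding = σ i then x.2 (w i)
        else (starRingEnd ℂ) (x.2 (w i))
      map_add' := fun x y => by
        funext i
        by_cases h : (w i).1.embedding = σ i <;> simp [h]
      map_smul' := fun r x => by
        funext i
        by_cases h : (w i).1.embedding = σ i <;>
          simp [h, Complex.real_smul, map_mul, Complex.conj_ofReal] }
  have hΦsurj : Function.Surjective Φ := by
    intro u
    refine ⟨(0, fun v => if ((w ((Equiv.ofBijective w ⟨hwinj, hwsurj⟩).symm v)).1.embedding
      = σ ((Equiv.ofBijective w ⟨hwinj, hwsurj⟩).symm v))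
      then u ((Equiv.ofBijective w ⟨hwinj, hwsurj⟩).symm v)
      else (starRingEnd ℂ) (u ((Equiv.ofBijective w ⟨hwinj, hwsurj⟩).symm v))), ?_⟩
    funext i
    have hsymm : (Equiv.ofBijective w ⟨hwinj, hwsurj⟩).symm (w i) = i :=
      (Equiv.ofBijective w ⟨hwinj, hwsurj⟩).symm_apply_apply i
    show (if (w i).1.embedding = σ i then _ else _) = u i
    by_cases h : (w i).1.embedding = σ i <;> simp [h, hsymm]
  have hΦψ : ∀ y : F, Φ (mixedEmbedding F y) = fun i => σ i y := by
    intro y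
    funext i
    show (if (w i).1.embedding = σ i then (mixedEmbedding F y).2 (w i)
      else (starRingEnd ℂ) ((mixedEmbedding F y).2 (w i))) = σ i y
    rw [mixedEmbedding.mixedEmbedding_apply_isComplex]
    by_cases h : (w i).1.embedding = σ i
    · rw [if_pos h, h]
    · rw [if_neg h]
      cases hembed i with
      | inl h' => exact absurd h' h
      | inr h' => rw [h']; simp
  have hspan := Module.Basis.span_eq (mixedEmbedding.latticeBasis F)
  have hmap : Submodule.map Φ (Submodule.span ℝ (Set.range (mixedEmbedding.latticeBasis F))) =
      Submodule.span ℝ (Set.range (fun j : Module.Free.ChooseBasisIndex ℤ (𝓞 F) =>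
        fun i => σ i (integralBasis F j))) := by
    have hrange : ⇑Φ ∘ (mixedEmbedding.latticeBasis F)
        = fun j => fun i => σ i (integralBasis F j) := funext fun j => by
      rw [Function.comp_apply, mixedEmbedding.latticeBasis_apply, hΦψ]
    rw [Submodule.map_span, ← Set.range_comp, hrange]
  rw [hspan, Submodule.map_top, LinearMap.range_eq_top.mpr hΦsurj] at hmap
  exact hmap.symm

end Aux

/-- For a totally complex number field `F` of degree `2k` with relative
canonical embedding `ψ(x) = (σ₁(x), …, σ_k(x)) ∈ ℂᵏ`, the dual of the lattice `Λ = ψ(O_F)`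
with respect to the inner product `⟨x,y⟩ = Re(x†y)` equals `2·conj(ψ(O_F^∨))`, where
`O_F^∨` is the codifferent and `conj` is componentwise complex conjugation. -/
theorem dual_lattice_eq_two_conj_codifferent
    (F : Type*) [Field F] [NumberField F] (k : ℕ) (hk : 0 < k)
    (σ : Fin k → (F →+* ℂ))
    (hdeg : Module.finrank ℚ F = 2 * k)
    (hcx : ∀ i, σ i ≠ (starRingEnd ℂ).comp (σ i))
    (hσ : ∀ φ : F →+* ℂ, ∃! i : Fin k, φ = σ i ∨ φ = (starRingEnd ℂ).comp (σ i)) :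
    {x : Fin k → ℂ | ∀ a : 𝓞 F,
        ∃ n : ℤ, (∑ i, starRingEnd ℂ (x i) * σ i (a : F)).re = (n : ℝ)}
      = (fun c : F => fun i => 2 * starRingEnd ℂ (σ i c)) ''
          {c : F | c ∈ FractionalIdeal.dual ℤ ℚ (1 : FractionalIdeal (𝓞 F)⁰ F)} := by
  classical
  ext x
  simp only [Set.mem_setOf_eq, Set.mem_image]
  constructor
  · intro hx
    choose n hn using hx
    set b : Module.Basis (Module.Free.ChooseBasisIndex ℤ (𝓞 F)) ℚ F := integralBasis F with hbdef
    set D := (Algebra.traceForm ℚ F).dualBasis (traceForm_nondegenerate ℚ F) b with hDdef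
    set c : F := ∑ j, ((n (RingOfIntegers.basis F j) : ℚ)) • D j with hcdef
    have hbj : ∀ j, ((RingOfIntegers.basis F j : 𝓞 F) : F) = b j := by
      intro j
      rw [hbdef, integralBasis_apply, RingOfIntegers.coe_eq_algebraMap]
    have htr : ∀ j, Algebra.trace ℚ F (c * b j) = ((n (RingOfIntegers.basis F j) : ℚ)) := by
      intro j
      rw [← Algebra.traceForm_apply, hcdef, LinearMap.BilinForm.sum_left]
      have : ∀ j' ∈ Finset.univ,
          (Algebra.traceForm ℚ F) ((n (RingOfIntegers.basis F j') : ℚ) • D j') (b j)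
          = (n (RingOfIntegers.basis F j') : ℚ) * (if j = j' then 1 else 0) := by
        intro j' _
        rw [LinearMap.BilinForm.smul_left, hDdef,
          LinearMap.BilinForm.apply_dualBasis_left]
      rw [Finset.sum_congr rfl this]
      simp
    -- the trace pairing of `c` against `b j` matches `x`'s pairing
    have hpair : ∀ j, pairLM (x - fun i => 2 * (starRingEnd ℂ) (σ i c))
        (fun i => σ i (b j)) = 0 := by
      intro j
      rw [pairLM_apply]
      have hsplit : ∀ i ∈ Finset.univ,
          (starRingEnd ℂ) ((x - fun i => 2 * (starRingEnd ℂ) (σ i c)) i) * σ i (b j)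
          = (starRingEnd ℂ) (x i) * σ i (b j) - 2 * σ i (c * b j) := by
        intro i _
        simp only [Pi.sub_apply, map_sub, map_mul, RingHomCompTriple.comp_apply,
          Complex.conj_conj, map_ofNat, sub_mul]
        ring
      rw [Finset.sum_congr rfl hsplit, Finset.sum_sub_distrib, Complex.sub_re]
      have h1 : (∑ i, (starRingEnd ℂ) (x i) * σ i (b j)).re
          = ((n (RingOfIntegers.basis F j) : ℤ) : ℝ) := by
        rw [← hbj j]; exact hn (RingOfIntegers.basis F j)
      have h2 : (∑ i, 2 * σ i (c * b j)).re = ((n (RingOfIntegers.basis F j) : ℤ) : ℝ) := by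
        rw [← Finset.mul_sum]
        have : ((2 : ℂ) * ∑ i, σ i (c * b j)).re = 2 * (∑ i, σ i (c * b j)).re := by
          simp [Complex.mul_re]
        rw [this, ← aux_trace σ hcx hσ (c * b j), htr j]
        norm_cast
      rw [h1, h2, sub_self]
    have hv : (x - fun i => 2 * (starRingEnd ℂ) (σ i c)) = 0 := by
      apply pairLM_self_eq_zero
      set v := x - fun i => 2 * (starRingEnd ℂ) (σ i c) with hvdef
      have hker : Submodule.span ℝ (Set.range (fun j : Module.Free.ChooseBasisIndex ℤ (𝓞 F) =>
          fun i => σ i (integralBasis F j))) ≤ LinearMap.ker (pairLM v) := by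
        rw [Submodule.span_le]
        rintro _ ⟨j, rfl⟩
        exact LinearMap.mem_ker.mpr (hpair j)
      rw [aux_span σ hcx hσ] at hker
      exact LinearMap.mem_ker.mp (hker (Submodule.mem_top (x := v)))
    have hxeq : x = fun i => 2 * (starRingEnd ℂ) (σ i c) := sub_eq_zero.mp hv
    refine ⟨c, ?_, hxeq.symm⟩
    rw [FractionalIdeal.mem_dual (I := (1 : FractionalIdeal (𝓞 F)⁰ F)) one_ne_zero]
    intro a ha
    rw [FractionalIdeal.mem_one_iff] at ha
    obtain ⟨a', rfl⟩ := ha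
    rw [Algebra.traceForm_apply]
    have hrepr : (algebraMap (𝓞 F) F) a' = ∑ j,
        ((RingOfIntegers.basis F).repr a' j : ℚ) • b j := by
      have := Module.Basis.sum_repr b ((algebraMap (𝓞 F) F) a')
      rw [← this]
      refine Finset.sum_congr rfl fun j _ => ?_
      congr 1
      rw [hbdef, ← RingOfIntegers.coe_eq_algebraMap, integralBasis_repr_apply]
      rfl
    rw [hrepr, Finset.mul_sum]
    have : ∀ j ∈ Finset.univ, c * (((RingOfIntegers.basis F).repr a' j : ℚ) • b j)
        = ((RingOfIntegers.basis F).repr a' j : ℚ) • (c * b j) := fun j _ => by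
      rw [Algebra.mul_smul_comm]
    rw [Finset.sum_congr rfl this, map_sum]
    refine ⟨∑ j, (RingOfIntegers.basis F).repr a' j * n (RingOfIntegers.basis F j), ?_⟩
    rw [map_sum]
    refine Finset.sum_congr rfl fun j _ => ?_
    rw [map_smul, htr j, smul_eq_mul]
    push_cast
    rfl
  · rintro ⟨c, hc, rfl⟩
    intro a
    have hmem := (FractionalIdeal.mem_dual (I := (1 : FractionalIdeal (𝓞 F)⁰ F)) one_ne_zero).mp hc ((algebraMap (𝓞 F) F) a)
      (FractionalIdeal.mem_one_iff _ |>.mpr ⟨a, rfl⟩)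
    rw [Algebra.traceForm_apply] at hmem
    obtain ⟨m, hm⟩ := hmem
    refine ⟨m, ?_⟩
    have hterm : ∀ i ∈ Finset.univ,
        (starRingEnd ℂ) (2 * (starRingEnd ℂ) (σ i c)) * σ i ((a : 𝓞 F) : F)
        = 2 * σ i (c * (a : F)) := by
      intro i _
      rw [map_mul, Complex.conj_conj, map_mul, map_ofNat]
      ring
    rw [Finset.sum_congr rfl hterm, ← Finset.mul_sum]
    have h2 : ((2 : ℂ) * ∑ i, σ i (c * (a : F))).re = 2 * (∑ i, σ i (c * (a : F))).re := by
      simp [Complex.mul_re]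
    rw [h2, ← aux_trace σ hcx hσ (c * (a : F))]
    rw [RingOfIntegers.coe_eq_algebraMap, ← hm, eq_intCast]
    norm_cast
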